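/- Let μ_n, μ be finite measures on [0, ∞) whose Laplace transforms satisfy ∫ e^{−tλ} μ_n(dλ) → ∫ e^{−tλ} μ(dλ) for every t > 0, and μ_n([0,∞)) → μ([0,∞)). Then μ_n → μ weakly. Moreover if μ = c δ_ρ + μ' with μ'([0, ρ + ε)) = 0 and c > 0, and each μ_n = c_n δ_{ρ_n} + μ_n' with μ_n'([0, λ]) = 0 for a fixed λ > ρ and ρ_n ∈ [0, λ'] with λ' < λ, then ρ_n → ρ and c_n → c. -/

import Mathlib

open MeasureTheory Filter NNReal

namespace Stmt17Aux4

lemma ae_le {ν : Measure ℝ} {b : ℝ} (h : ν (Set.Iio b) = 0) : ∀ᵐ x ∂ν, b ≤ x := by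
  rw [ae_iff]; convert h using 2; ext x; simp [not_le]

lemma exp_neg_mem {x : ℝ} (hx : 0 ≤ x) : Real.exp (-x) ∈ Set.Icc (0 : ℝ) 1 :=
  ⟨(Real.exp_pos _).le, Real.exp_le_one_iff.mpr (by linarith)⟩

lemma integrable_comp {ν : Measure ℝ} [IsFiniteMeasure ν] (hν : ν (Set.Iio 0) = 0)
    {g : ℝ → ℝ} (hg : Continuous g) : Integrable (fun x => g (Real.exp (-x))) ν := by
  obtain ⟨M, hM⟩ := (isCompact_Icc (a := (0:ℝ)) (b := 1)).exists_bound_of_continuousOn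
    hg.continuousOn
  refine (integrable_const M).mono'
    ((hg.comp (Real.continuous_exp.comp continuous_neg)).aestronglyMeasurable) ?_
  filter_upwards [ae_le hν] with x hx
  exact hM _ (exp_neg_mem hx)

lemma abs_integral_comp_le {ν : Measure ℝ} [IsFiniteMeasure ν] (hν : ν (Set.Iio 0) = 0)
    {h : ℝ → ℝ} {ε : ℝ} (hb : ∀ y ∈ Set.Icc (0:ℝ) 1, |h y| ≤ ε) :
    |∫ x, h (Real.exp (-x)) ∂ν| ≤ ε * (ν Set.univ).toReal := by
  rw [← Real.norm_eq_abs]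
  refine norm_integral_le_of_norm_le_const ?_
  filter_upwards [ae_le hν] with x hx
  rw [Real.norm_eq_abs]
  exact hb _ (exp_neg_mem hx)

variable {μn : ℕ → Measure ℝ} {μ : Measure ℝ}
    [∀ n, IsFiniteMeasure (μn n)] [IsFiniteMeasure μ]

lemma tendsto_pow
    (hsupp : ∀ n, μn n (Set.Iio 0) = 0) (hsupp' : μ (Set.Iio 0) = 0)
    (hLaplace : ∀ t : ℝ, 0 < t →
      Tendsto (fun n => ∫ lam, Real.exp (-(t * lam)) ∂(μn n)) atTop
        (nhds (∫ lam, Real.exp (-(t * lam)) ∂μ)))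
    (hmass : Tendsto (fun n => (μn n Set.univ).toReal) atTop (nhds (μ Set.univ).toReal))
    (k : ℕ) :
    Tendsto (fun n => ∫ x, (Real.exp (-x)) ^ k ∂(μn n)) atTop
      (nhds (∫ x, (Real.exp (-x)) ^ k ∂μ)) := by
  rcases Nat.eq_zero_or_pos k with hk | hk
  · subst hk
    simpa [integral_const, smul_eq_mul, measureReal_def] using hmass
  · have hrw : ∀ x : ℝ, (Real.exp (-x)) ^ k = Real.exp (-((k : ℝ) * x)) := by
      intro x
      rw [← Real.exp_nat_mul]
      ring_nf
    simp_rw [hrw]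
    exact hLaplace k (by exact_mod_cast hk)

lemma tendsto_poly
    (hsupp : ∀ n, μn n (Set.Iio 0) = 0) (hsupp' : μ (Set.Iio 0) = 0)
    (hLaplace : ∀ t : ℝ, 0 < t →
      Tendsto (fun n => ∫ lam, Real.exp (-(t * lam)) ∂(μn n)) atTop
        (nhds (∫ lam, Real.exp (-(t * lam)) ∂μ)))
    (hmass : Tendsto (fun n => (μn n Set.univ).toReal) atTop (nhds (μ Set.univ).toReal))
    (p : Polynomial ℝ) :
    Tendsto (fun n => ∫ x, p.eval (Real.exp (-x)) ∂(μn n)) atTop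
      (nhds (∫ x, p.eval (Real.exp (-x)) ∂μ)) := by
  induction p using Polynomial.induction_on' with
  | add p q hp hq =>
    have hip : ∀ (ν : Measure ℝ) [IsFiniteMeasure ν], ν (Set.Iio 0) = 0 →
        Integrable (fun x => p.eval (Real.exp (-x))) ν := fun ν _ hν =>
      integrable_comp hν (Polynomial.continuous p)
    have hiq : ∀ (ν : Measure ℝ) [IsFiniteMeasure ν], ν (Set.Iio 0) = 0 →
        Integrable (fun x => q.eval (Real.exp (-x))) ν := fun ν _ hν =>
      integrable_comp hν (Polynomial.continuous q)
    simp only [Polynomial.eval_add]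
    have heq : ∀ (ν : Measure ℝ) [IsFiniteMeasure ν], ν (Set.Iio 0) = 0 →
        ∫ x, (p.eval (Real.exp (-x)) + q.eval (Real.exp (-x))) ∂ν =
        (∫ x, p.eval (Real.exp (-x)) ∂ν) + ∫ x, q.eval (Real.exp (-x)) ∂ν := by
      intro ν _ hν
      exact integral_add (hip ν hν) (hiq ν hν)
    simp_rw [fun n => heq (μn n) (hsupp n), heq μ hsupp']
    exact hp.add hq
  | monomial k a =>
    simp only [Polynomial.eval_monomial]
    simp_rw [integral_const_mul]
    exact (tendsto_pow hsupp hsupp' hLaplace hmass k).const_mul a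

end Stmt17Aux4

namespace T2
open Stmt17Aux4
variable {μn : ℕ → Measure ℝ} {μ : Measure ℝ}
    [∀ n, IsFiniteMeasure (μn n)] [IsFiniteMeasure μ]

set_option linter.unusedSectionVars false
set_option linter.unusedVariables false

lemma tendsto_comp
    (hsupp : ∀ n, μn n (Set.Iio 0) = 0) (hsupp' : μ (Set.Iio 0) = 0)
    (hLaplace : ∀ t : ℝ, 0 < t →
      Tendsto (fun n => ∫ lam, Real.exp (-(t * lam)) ∂(μn n)) atTop
        (nhds (∫ lam, Real.exp (-(t * lam)) ∂μ)))
    (hmass : Tendsto (fun n => (μn n Set.univ).toReal) atTop (nhds (μ Set.univ).toReal))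
    {g : ℝ → ℝ} (hg : Continuous g) :
    Tendsto (fun n => ∫ x, g (Real.exp (-x)) ∂(μn n)) atTop
      (nhds (∫ x, g (Real.exp (-x)) ∂μ)) := by
  obtain ⟨C0, hC0⟩ := hmass.bddAbove_range
  set C : ℝ := max C0 0 with hCdef
  have hCn : ∀ n, (μn n Set.univ).toReal ≤ C := fun n =>
    le_max_of_le_left (hC0 ⟨n, rfl⟩)
  have hCμ : (μ Set.univ).toReal ≤ C :=
    le_of_tendsto hmass (Eventually.of_forall hCn)
  have hC : 0 ≤ C := le_max_right _ _
  rw [Metric.tendsto_atTop]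
  intro ε hε
  have hC1 : (0:ℝ) < C + 1 := by linarith
  set ε' : ℝ := ε / (4 * (C + 1)) with hε'def
  have hε' : 0 < ε' := by positivity
  obtain ⟨p, hp⟩ := exists_polynomial_near_of_continuousOn 0 1 g hg.continuousOn ε' hε'
  have hmid := tendsto_poly hsupp hsupp' hLaplace hmass p
  rw [Metric.tendsto_atTop] at hmid
  obtain ⟨N, hN⟩ := hmid (ε/4) (by positivity)
  refine ⟨N, fun n hn => ?_⟩
  have hb : ∀ y ∈ Set.Icc (0:ℝ) 1, |g y - p.eval y| ≤ ε' := by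
    intro y hy
    rw [abs_sub_comm]
    exact (hp y hy).le
  have h1 : ∀ (ν : Measure ℝ) [IsFiniteMeasure ν], ν (Set.Iio 0) = 0 →
      (ν Set.univ).toReal ≤ C →
      |(∫ x, g (Real.exp (-x)) ∂ν) - ∫ x, p.eval (Real.exp (-x)) ∂ν| ≤ ε/4 := by
    intro ν _ hν hmν
    rw [← integral_sub (integrable_comp hν hg) (integrable_comp hν (Polynomial.continuous p))]
    have := abs_integral_comp_le (h := fun y => g y - p.eval y) hν hb
    have h2 : ε' * (ν Set.univ).toReal ≤ ε' * (C + 1) :=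
      mul_le_mul_of_nonneg_left (by linarith) hε'.le
    have h3 : ε' * (C + 1) = ε / 4 := by
      rw [hε'def]; field_simp
    linarith
  have hA := h1 (μn n) (hsupp n) (hCn n)
  have hB := h1 μ hsupp' hCμ
  have hM := hN n hn
  rw [Real.dist_eq] at hM ⊢
  have tri : |(∫ x, g (Real.exp (-x)) ∂(μn n)) - ∫ x, g (Real.exp (-x)) ∂μ| ≤
      |(∫ x, g (Real.exp (-x)) ∂(μn n)) - ∫ x, p.eval (Real.exp (-x)) ∂(μn n)|
      + |(∫ x, p.eval (Real.exp (-x)) ∂(μn n)) - ∫ x, p.eval (Real.exp (-x)) ∂μ|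
      + |(∫ x, p.eval (Real.exp (-x)) ∂μ) - ∫ x, g (Real.exp (-x)) ∂μ| := by
    have := abs_sub_le (∫ x, g (Real.exp (-x)) ∂(μn n))
      (∫ x, p.eval (Real.exp (-x)) ∂(μn n)) (∫ x, g (Real.exp (-x)) ∂μ)
    have := abs_sub_le (∫ x, p.eval (Real.exp (-x)) ∂(μn n))
      (∫ x, p.eval (Real.exp (-x)) ∂μ) (∫ x, g (Real.exp (-x)) ∂μ)
    linarith
  rw [abs_sub_comm] at hB
  linarith

lemma tail_le {ν : Measure ℝ} [IsFiniteMeasure ν] (hν : ν (Set.Iio 0) = 0) {t T : ℝ}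
    (ht : 0 < t) (hT : Real.exp (-(t*T)) ≤ 1/2) :
    (ν (Set.Ioi T)).toReal ≤ 2 * ∫ x, (1 - Real.exp (-(t*x))) ∂ν := by
  set h : ℝ → ℝ := fun x => 1 - Real.exp (-(t*x)) with hdef
  have hcont : Continuous h := by
    simp only [hdef]; continuity
  have hint : Integrable h ν := by
    refine (integrable_const 1).mono' hcont.aestronglyMeasurable ?_
    filter_upwards [ae_le hν] with x hx
    rw [Real.norm_eq_abs, abs_le]
    have h1 : Real.exp (-(t*x)) ≤ 1 := Real.exp_le_one_iff.mpr (by nlinarith)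
    have h2 : 0 < Real.exp (-(t*x)) := Real.exp_pos _
    constructor <;> simp only [hdef] <;> linarith
  have h0 : 0 ≤ᵐ[ν] h := by
    filter_upwards [ae_le hν] with x hx
    have h1 : Real.exp (-(t*x)) ≤ 1 := Real.exp_le_one_iff.mpr (by nlinarith)
    simp only [hdef, Pi.zero_apply]; linarith
  have h1 : (1/2 : ℝ) * (ν (Set.Ioi T)).toReal ≤ ∫ x in Set.Ioi T, h x ∂ν := by
    have hmono := setIntegral_mono_on (s := Set.Ioi T) (f := fun _ => (1/2 : ℝ)) (g := h)
      (integrableOn_const (measure_lt_top ν _).ne) hint.integrableOn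
      measurableSet_Ioi ?_
    · simpa [setIntegral_const, smul_eq_mul, mul_comm, measureReal_def] using hmono
    · intro x hx
      have hx' : T < x := hx
      have : Real.exp (-(t*x)) ≤ Real.exp (-(t*T)) := Real.exp_le_exp.mpr (by nlinarith)
      simp only [hdef]; linarith
  have h2 : ∫ x in Set.Ioi T, h x ∂ν ≤ ∫ x, h x ∂ν := setIntegral_le_integral hint h0
  linarith

lemma tight
    (hsupp : ∀ n, μn n (Set.Iio 0) = 0) (hsupp' : μ (Set.Iio 0) = 0)
    (hLaplace : ∀ t : ℝ, 0 < t →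
      Tendsto (fun n => ∫ lam, Real.exp (-(t * lam)) ∂(μn n)) atTop
        (nhds (∫ lam, Real.exp (-(t * lam)) ∂μ)))
    (hmass : Tendsto (fun n => (μn n Set.univ).toReal) atTop (nhds (μ Set.univ).toReal))
    {ε : ℝ} (hε : 0 < ε) :
    ∃ T : ℝ, 0 ≤ T ∧ (μ (Set.Ioi T)).toReal ≤ ε ∧
      ∀ᶠ n in atTop, (μn n (Set.Ioi T)).toReal ≤ ε := by
  -- dominated convergence : ∫ (1 - exp(-(x/(k+1)))) dμ → 0 as k → ∞
  have hA : Tendsto (fun k : ℕ => ∫ x, (1 - Real.exp (-((((k:ℝ)+1)⁻¹) * x))) ∂μ) atTop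
      (nhds 0) := by
    have h0 : (0:ℝ) = ∫ x, (0:ℝ) ∂μ := by simp
    rw [h0]
    refine tendsto_integral_of_dominated_convergence (fun _ => 1)
      (fun k => ?_) (integrable_const 1) (fun k => ?_) ?_
    · exact (continuous_const.sub (Real.continuous_exp.comp
        ((continuous_const.mul continuous_id).neg))).aestronglyMeasurable
    · filter_upwards [ae_le hsupp'] with x hx
      have hk : (0:ℝ) < (k:ℝ)+1 := by positivity
      have h1 : Real.exp (-((((k:ℝ)+1)⁻¹) * x)) ≤ 1 := by
        apply Real.exp_le_one_iff.mpr
        have : 0 ≤ (((k:ℝ)+1)⁻¹) * x := by positivity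
        linarith
      have h2 : 0 < Real.exp (-((((k:ℝ)+1)⁻¹) * x)) := Real.exp_pos _
      rw [Real.norm_eq_abs, abs_le]
      constructor <;> linarith
    · refine Eventually.of_forall fun x => ?_
      have h1 : Tendsto (fun k : ℕ => (((k:ℝ)+1)⁻¹) * x) atTop (nhds 0) := by
        have := tendsto_one_div_add_atTop_nhds_zero_nat (𝕜 := ℝ)
        simp only [one_div] at this
        simpa using this.mul_const x
      have h2 : Tendsto (fun k : ℕ => Real.exp (-((((k:ℝ)+1)⁻¹) * x))) atTop
          (nhds (Real.exp (-0))) :=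
        (Real.continuous_exp.tendsto _).comp (h1.neg)
      simp only [neg_zero, Real.exp_zero] at h2
      have := h2.const_sub 1
      simpa using this
  obtain ⟨k, hk⟩ := (hA.eventually (gt_mem_nhds (show (0:ℝ) < ε/4 by linarith))).exists
  set t : ℝ := ((k:ℝ)+1)⁻¹ with htdef
  have ht : 0 < t := by positivity
  set T : ℝ := ((k:ℝ)+1) * Real.log 2 with hTdef
  have hT0 : 0 ≤ T := by
    have := Real.log_nonneg (by norm_num : (1:ℝ) ≤ 2)
    positivity
  have hTexp : Real.exp (-(t*T)) ≤ 1/2 := by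
    have h1 : t * T = Real.log 2 := by
      rw [htdef, hTdef]
      field_simp
    rw [h1, Real.exp_neg, Real.exp_log (by norm_num : (0:ℝ) < 2)]
    norm_num
  -- the integrals against μn n converge to the one against μ
  have hint : ∀ (ν : Measure ℝ) [IsFiniteMeasure ν], ν (Set.Iio 0) = 0 →
      ∫ x, (1 - Real.exp (-(t*x))) ∂ν =
        (ν Set.univ).toReal - ∫ x, Real.exp (-(t*x)) ∂ν := by
    intro ν _ hν
    have hi : Integrable (fun x => Real.exp (-(t*x))) ν := by
      refine (integrable_const 1).mono'
        ((Real.continuous_exp.comp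
          ((continuous_const.mul continuous_id).neg)).aestronglyMeasurable) ?_
      filter_upwards [ae_le hν] with x hx
      rw [Real.norm_eq_abs, abs_of_nonneg (Real.exp_nonneg _)]
      exact Real.exp_le_one_iff.mpr (by nlinarith)
    rw [integral_sub (integrable_const 1) hi]
    simp [integral_const, smul_eq_mul, measureReal_def]
  have hconv : Tendsto (fun n => ∫ x, (1 - Real.exp (-(t*x))) ∂(μn n)) atTop
      (nhds (∫ x, (1 - Real.exp (-(t*x))) ∂μ)) := by
    simp_rw [fun n => hint (μn n) (hsupp n), hint μ hsupp']
    exact hmass.sub (hLaplace t ht)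
  have hμval : ∫ x, (1 - Real.exp (-(t*x))) ∂μ < ε/4 := hk
  refine ⟨T, hT0, ?_, ?_⟩
  · have := tail_le hsupp' ht hTexp
    linarith
  · have hev : ∀ᶠ n in atTop, ∫ x, (1 - Real.exp (-(t*x))) ∂(μn n) < ε/2 :=
      hconv.eventually (gt_mem_nhds (by linarith))
    filter_upwards [hev] with n hn
    have := tail_le (hsupp n) ht hTexp
    linarith

end T2

namespace T3
open Stmt17Aux4 T2
variable {μn : ℕ → Measure ℝ} {μ : Measure ℝ}
    [∀ n, IsFiniteMeasure (μn n)] [IsFiniteMeasure μ]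

set_option linter.unusedSectionVars false
set_option linter.unusedVariables false

lemma part1
    (hsupp : ∀ n, μn n (Set.Iio 0) = 0) (hsupp' : μ (Set.Iio 0) = 0)
    (hLaplace : ∀ t : ℝ, 0 < t →
      Tendsto (fun n => ∫ lam, Real.exp (-(t * lam)) ∂(μn n)) atTop
        (nhds (∫ lam, Real.exp (-(t * lam)) ∂μ)))
    (hmass : Tendsto (fun n => (μn n Set.univ).toReal) atTop (nhds (μ Set.univ).toReal))
    (f : BoundedContinuousFunction ℝ ℝ) :
    Tendsto (fun n => ∫ x, f x ∂(μn n)) atTop (nhds (∫ x, f x ∂μ)) := by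
  set M : ℝ := ‖f‖ with hMdef
  have hM : ∀ x : ℝ, |f x| ≤ M := fun x => f.norm_coe_le_norm x
  have hM0 : 0 ≤ M := norm_nonneg f
  rw [Metric.tendsto_atTop]
  intro ε hε
  have hM1 : (0:ℝ) < M + 1 := by linarith
  set ε₁ : ℝ := ε / (4 * (M + 1)) with hε₁def
  have hε₁ : 0 < ε₁ := by positivity
  obtain ⟨T, hT0, hμtail, hμntail⟩ := tight hsupp hsupp' hLaplace hmass hε₁
  set χ : ℝ → ℝ := fun x => min 1 (max 0 (T + 1 - x)) with hχdef
  have hχcont : Continuous χ :=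
    continuous_const.min (continuous_const.max (continuous_const.sub continuous_id))
  have hχ0 : ∀ x, 0 ≤ χ x := fun x => le_min zero_le_one (le_max_left _ _)
  have hχ1 : ∀ x, χ x ≤ 1 := fun x => min_le_left _ _
  have hχeq1 : ∀ x : ℝ, x ≤ T → χ x = 1 := by
    intro x hx
    have : (1:ℝ) ≤ T + 1 - x := by linarith
    simp only [hχdef]
    rw [max_eq_right (by linarith), min_eq_left this]
  have hχeq0 : ∀ x : ℝ, T + 1 ≤ x → χ x = 0 := by
    intro x hx
    simp only [hχdef]
    rw [max_eq_left (by linarith), min_eq_right zero_le_one]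
  set δ : ℝ := Real.exp (-(T + 2)) with hδdef
  have hδpos : 0 < δ := Real.exp_pos _
  set ψ : ℝ → ℝ := fun y => -Real.log (max y δ) with hψdef
  have hψcont : Continuous ψ :=
    ((continuous_id.max continuous_const).log
      (fun y => ne_of_gt (lt_of_lt_of_le hδpos (le_max_right _ _)))).neg
  set G : ℝ → ℝ := fun y => f (ψ y) * χ (ψ y) with hGdef
  have hGcont : Continuous G := ((f.continuous.comp hψcont)).mul (hχcont.comp hψcont)
  have hGcomp : ∀ x : ℝ, 0 ≤ x → G (Real.exp (-x)) = f x * χ x := by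
    intro x hx
    by_cases hx2 : x ≤ T + 2
    · have h1 : δ ≤ Real.exp (-x) := Real.exp_le_exp.mpr (by linarith)
      simp only [hGdef, hψdef]
      rw [max_eq_left h1, Real.log_exp, neg_neg]
    · push_neg at hx2
      have h1 : Real.exp (-x) ≤ δ := Real.exp_le_exp.mpr (by linarith)
      simp only [hGdef, hψdef]
      rw [max_eq_right h1, hδdef, Real.log_exp, neg_neg]
      rw [hχeq0 (T+2) (by linarith), hχeq0 x (by linarith)]
      ring
  have hGint : ∀ (ν : Measure ℝ) [IsFiniteMeasure ν], ν (Set.Iio 0) = 0 →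
      ∫ x, G (Real.exp (-x)) ∂ν = ∫ x, f x * χ x ∂ν := by
    intro ν _ hν
    refine integral_congr_ae ?_
    filter_upwards [ae_le hν] with x hx
    exact hGcomp x hx
  have hmid := tendsto_comp hsupp hsupp' hLaplace hmass hGcont
  simp_rw [fun n => hGint (μn n) (hsupp n), hGint μ hsupp'] at hmid
  rw [Metric.tendsto_atTop] at hmid
  obtain ⟨N₁, hN₁⟩ := hmid (ε/2) (by linarith)
  obtain ⟨N₂, hN₂⟩ := eventually_atTop.mp hμntail
  refine ⟨max N₁ N₂, fun n hn => ?_⟩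
  have hclaim : ∀ (ν : Measure ℝ) [IsFiniteMeasure ν], ν (Set.Iio 0) = 0 →
      |(∫ x, f x ∂ν) - ∫ x, f x * χ x ∂ν| ≤ M * (ν (Set.Ioi T)).toReal := by
    intro ν _ hν
    have hfint : Integrable (fun x => f x) ν := f.integrable ν
    have hfχint : Integrable (fun x => f x * χ x) ν := by
      refine (integrable_const M).mono'
        ((f.continuous.mul hχcont).aestronglyMeasurable) ?_
      refine Eventually.of_forall fun x => ?_
      rw [Real.norm_eq_abs, abs_mul]
      have := abs_of_nonneg (hχ0 x)
      nlinarith [hM x, hχ0 x, hχ1 x, abs_nonneg (f x)]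
    rw [← integral_sub hfint hfχint]
    have hvanish : ∀ x ∉ Set.Ioi T, f x - f x * χ x = 0 := by
      intro x hx
      rw [hχeq1 x (not_lt.mp hx)]
      ring
    rw [← setIntegral_eq_integral_of_forall_compl_eq_zero hvanish, ← Real.norm_eq_abs]
    refine norm_setIntegral_le_of_norm_le_const (measure_lt_top ν _) ?_
    intro x _
    rw [Real.norm_eq_abs]
    have h1 : f x - f x * χ x = f x * (1 - χ x) := by ring
    rw [h1, abs_mul]
    have h2 : |1 - χ x| ≤ 1 := by
      rw [abs_le]
      constructor <;> [linarith [hχ1 x]; linarith [hχ0 x]]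
    nlinarith [hM x, abs_nonneg (f x)]
  have hA := hclaim (μn n) (hsupp n)
  have hB := hclaim μ hsupp'
  have hMε : M * ε₁ ≤ ε/4 := by
    have h1 : M * ε₁ ≤ (M + 1) * ε₁ := by nlinarith
    have h2 : (M + 1) * ε₁ = ε/4 := by
      rw [hε₁def]; field_simp
    linarith
  have htailn : (μn n (Set.Ioi T)).toReal ≤ ε₁ := hN₂ n (le_trans (le_max_right _ _) hn)
  have hmidn := hN₁ n (le_trans (le_max_left _ _) hn)
  rw [Real.dist_eq] at hmidn ⊢
  have tri1 := abs_sub_le (∫ x, f x ∂(μn n)) (∫ x, f x * χ x ∂(μn n)) (∫ x, f x ∂μ)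
  have tri2 := abs_sub_le (∫ x, f x * χ x ∂(μn n)) (∫ x, f x * χ x ∂μ) (∫ x, f x ∂μ)
  rw [abs_sub_comm (∫ x, f x * χ x ∂μ) (∫ x, f x ∂μ)] at tri2
  have hmul1 : M * (μn n (Set.Ioi T)).toReal ≤ M * ε₁ :=
    mul_le_mul_of_nonneg_left htailn hM0
  have hmul2 : M * (μ (Set.Ioi T)).toReal ≤ M * ε₁ :=
    mul_le_mul_of_nonneg_left hμtail hM0
  linarith

end T3

namespace T4
open Stmt17Aux4 T2 T3
open scoped ENNReal
set_option linter.unusedSectionVars false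
set_option linter.unusedVariables false
set_option maxHeartbeats 1000000

-- copies of earlier verified lemmas (will be merged)
lemma lim0 (A δ : ℝ) (hδ : 0 < δ) :
    Tendsto (fun n : ℕ => A * Real.exp (-((n : ℝ) * δ))) atTop (nhds 0) := by
  have h : ∀ n : ℕ, A * Real.exp (-((n : ℝ) * δ)) = A * (Real.exp (-δ)) ^ n := by
    intro n; rw [← Real.exp_nat_mul]; ring_nf
  simp_rw [h]
  simpa using (_root_.tendsto_pow_atTop_nhds_zero_of_lt_one (Real.exp_nonneg _)
      (Real.exp_lt_one_iff.mpr (by linarith))).const_mul A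

lemma shift {c1 c2 K ρ1 ρ2 σ : ℝ}
    (h : ∀ t : ℝ, 0 < t → c1 * Real.exp (-(t * ρ1)) ≤
      c2 * Real.exp (-(t * ρ2)) + K * Real.exp (-(t * σ)))
    (h2 : ρ1 < ρ2) (h3 : ρ1 < σ) : c1 ≤ 0 := by
  have hlim : Tendsto (fun n : ℕ => c2 * Real.exp (-((n : ℝ) * (ρ2 - ρ1)))
      + K * Real.exp (-((n : ℝ) * (σ - ρ1)))) atTop (nhds 0) := by
    simpa using (lim0 c2 (ρ2 - ρ1) (by linarith)).add (lim0 K (σ - ρ1) (by linarith))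
  refine ge_of_tendsto hlim ?_
  filter_upwards [eventually_ge_atTop 1] with n hn
  have hn' : (0 : ℝ) < n := by exact_mod_cast Nat.lt_of_lt_of_le Nat.zero_lt_one hn
  have key := h n hn'
  set t : ℝ := (n : ℝ)
  have hX : (0 : ℝ) < Real.exp (-(t * ρ1)) := Real.exp_pos _
  have hY : Real.exp (-(t * ρ2)) / Real.exp (-(t * ρ1)) = Real.exp (-(t * (ρ2 - ρ1))) := by
    rw [← Real.exp_sub]; ring_nf
  have hZ : Real.exp (-(t * σ)) / Real.exp (-(t * ρ1)) = Real.exp (-(t * (σ - ρ1))) := by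
    rw [← Real.exp_sub]; ring_nf
  calc c1 = c1 * Real.exp (-(t * ρ1)) / Real.exp (-(t * ρ1)) := by field_simp
    _ ≤ (c2 * Real.exp (-(t * ρ2)) + K * Real.exp (-(t * σ))) / Real.exp (-(t * ρ1)) := by
        gcongr
    _ = c2 * (Real.exp (-(t * ρ2)) / Real.exp (-(t * ρ1)))
        + K * (Real.exp (-(t * σ)) / Real.exp (-(t * ρ1))) := by ring
    _ = c2 * Real.exp (-(t * (ρ2 - ρ1))) + K * Real.exp (-(t * (σ - ρ1))) := by rw [hY, hZ]

lemma key_lemma {c c' ρ ρ' ε lam K K' : ℝ} (hc : 0 < c) (hc' : 0 ≤ c') (hε : 0 < ε)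
    (hρlam : ρ < lam)
    (hA : ∀ t : ℝ, 0 < t → c' * Real.exp (-(t * ρ')) ≤
      c * Real.exp (-(t * ρ)) + K' * Real.exp (-(t * (ρ + ε))))
    (hB : ∀ t : ℝ, 0 < t → c * Real.exp (-(t * ρ)) ≤
      c' * Real.exp (-(t * ρ')) + K * Real.exp (-(t * lam))) : ρ' = ρ ∧ c' = c := by
  have hρρ' : ρ' = ρ := by
    rcases lt_trichotomy ρ' ρ with hlt | heq | hgt
    · exfalso
      have hc'0 : c' ≤ 0 := shift hA hlt (by linarith)
      have hc'0' : c' = 0 := le_antisymm hc'0 hc'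
      have : c ≤ 0 := by
        refine shift (c1 := c) (ρ1 := ρ) (c2 := 0) (ρ2 := ρ + 1) (K := K) (σ := lam) ?_
          (by linarith) hρlam
        intro t ht
        have := hB t ht
        rw [hc'0'] at this
        simpa using this
      linarith
    · exact heq
    · exfalso
      have : c ≤ 0 := shift hB hgt hρlam
      linarith
  subst hρρ'
  refine ⟨rfl, ?_⟩
  have h1 : c' - c ≤ 0 := by
    refine shift (c1 := c' - c) (ρ1 := ρ') (c2 := 0) (ρ2 := ρ' + 1) (K := K') (σ := ρ' + ε) ?_
      (by linarith) (by linarith)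
    intro t ht
    have := hA t ht
    nlinarith [Real.exp_pos (-(t * ρ'))]
  have h2 : c - c' ≤ 0 := by
    refine shift (c1 := c - c') (ρ1 := ρ') (c2 := 0) (ρ2 := ρ' + 1) (K := K) (σ := lam) ?_
      (by linarith) hρlam
    intro t ht
    have := hB t ht
    nlinarith [Real.exp_pos (-(t * ρ'))]
  linarith

lemma integrable_exp {ν : Measure ℝ} [IsFiniteMeasure ν] {b t : ℝ}
    (hb : ∀ᵐ x ∂ν, b ≤ x) (ht : 0 ≤ t) :
    Integrable (fun x => Real.exp (-(t * x))) ν := by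
  refine (integrable_const (Real.exp (-(t * b)))).mono'
    ((Real.continuous_exp.comp ((continuous_const.mul continuous_id).neg)).aestronglyMeasurable) ?_
  filter_upwards [hb] with x hx
  rw [Real.norm_eq_abs, abs_of_nonneg (Real.exp_nonneg _)]
  exact Real.exp_le_exp.mpr (by nlinarith)

lemma integral_exp_le {ν : Measure ℝ} [IsFiniteMeasure ν] {b t : ℝ}
    (hb : ∀ᵐ x ∂ν, b ≤ x) (ht : 0 ≤ t) :
    ∫ x, Real.exp (-(t * x)) ∂ν ≤ (ν Set.univ).toReal * Real.exp (-(t * b)) := by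
  have h := integral_mono_ae (integrable_exp hb ht) (integrable_const (Real.exp (-(t * b))))
    (by filter_upwards [hb] with x hx; exact Real.exp_le_exp.mpr (by nlinarith))
  simpa [integral_const, smul_eq_mul, measureReal_def] using h

lemma laplace_decomp {ν ν' : Measure ℝ} [IsFiniteMeasure ν] (c : ℝ≥0) (r : ℝ)
    (hν : ν = c • Measure.dirac r + ν') {b : ℝ} (hν' : ∀ᵐ x ∂ν', b ≤ x)
    (t : ℝ) (ht : 0 < t) :
    (c : ℝ) * Real.exp (-(t * r)) ≤ ∫ x, Real.exp (-(t * x)) ∂ν ∧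
    ∫ x, Real.exp (-(t * x)) ∂ν ≤
      (c : ℝ) * Real.exp (-(t * r)) + (ν' Set.univ).toReal * Real.exp (-(t * b)) := by
  have hle : ν' ≤ ν := by rw [hν]; exact Measure.le_add_left le_rfl
  haveI : IsFiniteMeasure ν' :=
    ⟨lt_of_le_of_lt (hle Set.univ) (measure_lt_top ν _)⟩
  have hint1 : Integrable (fun x => Real.exp (-(t * x))) ((c : ℝ≥0) • Measure.dirac r) := by
    refine Integrable.smul_measure ?_ (by simp)
    refine (integrable_const (Real.exp (-(t * r)))).mono'
      ((Real.continuous_exp.comp ((continuous_const.mul continuous_id).neg)).aestronglyMeasurable) ?_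
    have hae : ∀ᵐ x ∂(Measure.dirac r), x = r :=
      (MeasureTheory.ae_dirac_iff (by measurability)).mpr rfl
    filter_upwards [hae] with x hx
    rw [hx, Real.norm_eq_abs, abs_of_nonneg (Real.exp_nonneg _)]
  have hint2 : Integrable (fun x => Real.exp (-(t * x))) ν' := integrable_exp hν' ht.le
  have hsplit : ∫ x, Real.exp (-(t * x)) ∂ν =
      (c : ℝ) * Real.exp (-(t * r)) + ∫ x, Real.exp (-(t * x)) ∂ν' := by
    rw [hν, integral_add_measure hint1 hint2, integral_smul_nnreal_measure, integral_dirac]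
    rw [NNReal.smul_def, smul_eq_mul]
  constructor
  · rw [hsplit]
    have : 0 ≤ ∫ x, Real.exp (-(t * x)) ∂ν' :=
      integral_nonneg fun x => Real.exp_nonneg _
    linarith
  · rw [hsplit]
    have := integral_exp_le hν' ht.le
    linarith

variable {μn : ℕ → Measure ℝ} {μ : Measure ℝ}
    [∀ n, IsFiniteMeasure (μn n)] [IsFiniteMeasure μ]

lemma part2
    (hLaplace : ∀ t : ℝ, 0 < t →
      Tendsto (fun n => ∫ lam, Real.exp (-(t * lam)) ∂(μn n)) atTop
        (nhds (∫ lam, Real.exp (-(t * lam)) ∂μ)))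
    (hmass : Tendsto (fun n => (μn n Set.univ).toReal) atTop (nhds (μ Set.univ).toReal))
    (c : ℝ≥0) (ρ ε : ℝ) (μ' : Measure ℝ) (cn : ℕ → ℝ≥0) (ρn : ℕ → ℝ)
    (μn' : ℕ → Measure ℝ) (lam lam' : ℝ)
    (hμdec : μ = c • Measure.dirac ρ + μ') (hc : 0 < c) (hρ0 : 0 ≤ ρ) (hε : 0 < ε)
    (hμ' : μ' (Set.Iio (ρ + ε)) = 0)
    (hμndec : ∀ n, μn n = cn n • Measure.dirac (ρn n) + μn' n)
    (hρlam' : ρ < lam') (hlam'lam : lam' < lam)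
    (hμn' : ∀ n, μn' n (Set.Iic lam) = 0)
    (hρn : ∀ n, ρn n ∈ Set.Icc 0 lam') :
    Tendsto ρn atTop (nhds ρ) ∧ Tendsto (fun n => (cn n : ℝ)) atTop (nhds (c : ℝ)) := by
  -- uniform bounds
  obtain ⟨B0, hB0⟩ := hmass.bddAbove_range
  set B : ℝ := max B0 0 with hBdef
  have hBn : ∀ n, (μn n Set.univ).toReal ≤ B := fun n =>
    le_max_of_le_left (hB0 ⟨n, rfl⟩)
  have hB0' : 0 ≤ B := le_max_right _ _
  have hcnB : ∀ n, (cn n : ℝ) ≤ B := by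
    intro n
    have h1 : ((cn n : ℝ≥0∞)) ≤ μn n Set.univ := by
      have h2 : (cn n • Measure.dirac (ρn n)) Set.univ ≤ μn n Set.univ := by
        rw [hμndec n, Measure.add_apply]
        exact le_self_add
      rw [Measure.smul_apply, measure_univ, ENNReal.smul_def, smul_eq_mul, mul_one] at h2
      exact h2
    have h2 := ENNReal.toReal_mono (measure_ne_top (μn n) _) h1
    simp only [ENNReal.coe_toReal] at h2
    exact le_trans h2 (hBn n)
  have hKn : ∀ n, (μn' n Set.univ).toReal ≤ B := by
    intro n
    have h1 : μn' n Set.univ ≤ μn n Set.univ := by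
      rw [hμndec n, Measure.add_apply]
      exact le_add_self
    exact le_trans (ENNReal.toReal_mono (measure_ne_top (μn n) _) h1) (hBn n)
  -- a.e. lower bounds
  have haeμ' : ∀ᵐ x ∂μ', (ρ + ε) ≤ x := by
    rw [ae_iff]
    convert hμ' using 2
    ext x; simp [not_le]
  have haeμn' : ∀ n, ∀ᵐ x ∂(μn' n), lam ≤ x := by
    intro n
    rw [ae_iff]
    refine measure_mono_null ?_ (hμn' n)
    intro x hx
    simp only [Set.mem_setOf_eq, not_le] at hx
    exact le_of_lt hx
  -- joint convergence of the pair via subsequences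
  have hpair : Tendsto (fun n => (ρn n, (cn n : ℝ))) atTop (nhds (ρ, (c : ℝ))) := by
    refine tendsto_of_subseq_tendsto fun ns hns => ?_
    have hcomp : IsCompact ((Set.Icc 0 lam') ×ˢ (Set.Icc 0 B)) :=
      isCompact_Icc.prod isCompact_Icc
    have hmemall : ∀ k, (ρn (ns k), (cn (ns k) : ℝ)) ∈ (Set.Icc 0 lam') ×ˢ (Set.Icc 0 B) :=
      fun k => ⟨hρn (ns k), ⟨(cn (ns k)).coe_nonneg, hcnB (ns k)⟩⟩
    obtain ⟨⟨ρ', c'⟩, hmem, φ, hφ, hφt⟩ := hcomp.tendsto_subseq hmemall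
    set m : ℕ → ℕ := fun k => ns (φ k) with hmdef
    have hm : Tendsto m atTop atTop := hns.comp hφ.tendsto_atTop
    have hρseq : Tendsto (fun k => ρn (m k)) atTop (nhds ρ') :=
      (continuous_fst.tendsto _).comp hφt
    have hcseq : Tendsto (fun k => (cn (m k) : ℝ)) atTop (nhds c') :=
      (continuous_snd.tendsto _).comp hφt
    -- Laplace comparison for each t > 0
    have hL : ∀ t : ℝ, 0 < t →
        (c' * Real.exp (-(t * ρ')) ≤
          c * Real.exp (-(t * ρ)) + (μ' Set.univ).toReal * Real.exp (-(t * (ρ + ε)))) ∧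
        ((c : ℝ) * Real.exp (-(t * ρ)) ≤
          c' * Real.exp (-(t * ρ')) + B * Real.exp (-(t * lam))) := by
      intro t ht
      have hμside := laplace_decomp c ρ hμdec haeμ' t ht
      have hexp : Tendsto (fun k => Real.exp (-(t * ρn (m k)))) atTop
          (nhds (Real.exp (-(t * ρ')))) :=
        ((Real.continuous_exp.comp ((continuous_const.mul continuous_id).neg)).tendsto ρ').comp
          hρseq
      have hlim1 : Tendsto (fun k => (cn (m k) : ℝ) * Real.exp (-(t * ρn (m k)))) atTop
          (nhds (c' * Real.exp (-(t * ρ')))) := hcseq.mul hexp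
      have hlim2 : Tendsto (fun k => ∫ x, Real.exp (-(t * x)) ∂(μn (m k))) atTop
          (nhds (∫ x, Real.exp (-(t * x)) ∂μ)) := (hLaplace t ht).comp hm
      have hnk := fun k => laplace_decomp (cn (m k)) (ρn (m k)) (hμndec (m k))
        (haeμn' (m k)) t ht
      have hAside : c' * Real.exp (-(t * ρ')) ≤ ∫ x, Real.exp (-(t * x)) ∂μ :=
        le_of_tendsto_of_tendsto' hlim1 hlim2 fun k => (hnk k).1
      have hBside : ∫ x, Real.exp (-(t * x)) ∂μ ≤
          c' * Real.exp (-(t * ρ')) + B * Real.exp (-(t * lam)) := by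
        refine le_of_tendsto_of_tendsto' hlim2 (hlim1.add tendsto_const_nhds) fun k => ?_
        refine le_trans (hnk k).2 ?_
        have := mul_le_mul_of_nonneg_right (hKn (m k)) (Real.exp_nonneg (-(t * lam)))
        linarith
      exact ⟨le_trans hAside hμside.2, le_trans hμside.1 hBside⟩
    have hkey := key_lemma (K := B) (K' := (μ' Set.univ).toReal)
      (by exact_mod_cast hc) hmem.2.1 hε (lt_trans hρlam' hlam'lam)
      (fun t ht => (hL t ht).1) (fun t ht => (hL t ht).2)
    obtain ⟨he1, he2⟩ := hkey
    refine ⟨φ, ?_⟩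
    rw [← he1, ← he2]
    exact hφt
  exact ⟨(continuous_fst.tendsto _).comp hpair, (continuous_snd.tendsto _).comp hpair⟩

end T4

/-- convergence of Laplace transforms of finite measures on `[0, ∞)`
(together with convergence of total masses) implies weak convergence; moreover, under a
uniform spectral-gap decomposition `μ_n = c_n δ_{ρ_n} + μ_n'` with atoms
`ρ_n ∈ [0, λ']`, `λ' < λ`, continuous parts supported in `[λ, ∞)`, and limit
`μ = c δ_ρ + μ'` with `c > 0` and `μ'` vanishing on `[0, ρ + ε)`, the atoms and their
masses converge: `ρ_n → ρ` and `c_n → c`. -/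
theorem stmt17 (μn : ℕ → Measure ℝ) (μ : Measure ℝ)
    [∀ n, IsFiniteMeasure (μn n)] [IsFiniteMeasure μ]
    (hsupp : ∀ n, μn n (Set.Iio 0) = 0) (hsupp' : μ (Set.Iio 0) = 0)
    (hLaplace : ∀ t : ℝ, 0 < t →
      Tendsto (fun n => ∫ lam, Real.exp (-(t * lam)) ∂(μn n)) atTop
        (nhds (∫ lam, Real.exp (-(t * lam)) ∂μ)))
    (hmass : Tendsto (fun n => (μn n Set.univ).toReal) atTop (nhds (μ Set.univ).toReal)) :
    (∀ f : BoundedContinuousFunction ℝ ℝ,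
      Tendsto (fun n => ∫ lam, f lam ∂(μn n)) atTop (nhds (∫ lam, f lam ∂μ))) ∧
    (∀ (c : ℝ≥0) (ρ ε : ℝ) (μ' : Measure ℝ) (cn : ℕ → ℝ≥0) (ρn : ℕ → ℝ)
        (μn' : ℕ → Measure ℝ) (lam lam' : ℝ),
        μ = c • Measure.dirac ρ + μ' → 0 < c → 0 ≤ ρ → 0 < ε →
        μ' (Set.Iio (ρ + ε)) = 0 →
        (∀ n, μn n = cn n • Measure.dirac (ρn n) + μn' n) →
        ρ < lam' → lam' < lam →
        (∀ n, μn' n (Set.Iic lam) = 0) →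
        (∀ n, ρn n ∈ Set.Icc 0 lam') →
        Tendsto ρn atTop (nhds ρ) ∧ Tendsto (fun n => (cn n : ℝ)) atTop (nhds (c : ℝ))) := by
  constructor
  · intro f
    exact T3.part1 hsupp hsupp' hLaplace hmass f
  · intro c ρ ε μ' cn ρn μn' lam lam' h1 h2 h3 h4 h5 h6 h7 h8 h9 h10
    exact T4.part2 hLaplace hmass c ρ ε μ' cn ρn μn' lam lam'
      h1 h2 h3 h4 h5 h6 h7 h8 h9 h10
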